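/- Let E be a sublinear expectation on ℋ. Then every linear functional f : ℋ → ℝ with f(X) ≤ E[X] for all X ∈ ℋ is a linear expectation: f is monotone (X ≤ Y pointwise implies f(X) ≤ f(Y)) and constant preserving (f(c) = c for every constant function c). Consequently E is the pointwise supremum of a nonempty family of linear expectations on ℋ. -/

import Mathlib

/-- Let `E` be a sublinear expectation on a linear subspace `ℋ` of the real
functions on `Ω` containing the constants.  Then every linear functional on `ℋ` dominated by
`E` is a linear expectation (monotone and constant preserving), and `E` is the pointwise
supremum of the (nonempty) family of linear expectations dominated by it. -/
theorem sublinear_expectation_is_sup_of_linear_expectations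
    {Ω : Type*} (ℋ : Submodule ℝ (Ω → ℝ))
    (hconst : ∀ c : ℝ, (fun _ : Ω => c) ∈ ℋ)
    (E : ℋ → ℝ)
    (hmono : ∀ X Y : ℋ, (∀ ω, (X : Ω → ℝ) ω ≤ (Y : Ω → ℝ) ω) → E X ≤ E Y)
    (hcp : ∀ c : ℝ, E ⟨fun _ => c, hconst c⟩ = c)
    (hsub : ∀ X Y : ℋ, E (X + Y) ≤ E X + E Y)
    (hhom : ∀ (l : ℝ), 0 ≤ l → ∀ X : ℋ, E (l • X) = l * E X) :
    (∀ f : ℋ →ₗ[ℝ] ℝ, (∀ X, f X ≤ E X) →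
        ((∀ X Y : ℋ, (∀ ω, (X : Ω → ℝ) ω ≤ (Y : Ω → ℝ) ω) → f X ≤ f Y) ∧
          ∀ c : ℝ, f ⟨fun _ => c, hconst c⟩ = c)) ∧
      (∃ f : ℋ →ₗ[ℝ] ℝ, ∀ X, f X ≤ E X) ∧
      ∀ X : ℋ, IsLUB {r : ℝ | ∃ f : ℋ →ₗ[ℝ] ℝ, (∀ Y, f Y ≤ E Y) ∧ r = f X} (E X) := by
  have hzero : E 0 = 0 := by
    have h0 : (0 : ℋ) = ⟨fun _ => (0 : ℝ), hconst 0⟩ := by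
      apply Subtype.ext; rfl
    rw [h0, hcp]
  -- E(c • X) ≥ c * E X for c < 0 consequence: c * E X ≤ E (c • X) for all c
  have hkey : ∀ (c : ℝ) (X : ℋ), c * E X ≤ E (c • X) := by
    intro c X
    rcases le_or_gt 0 c with hc | hc
    · rw [hhom c hc]
    · have h1 : (0 : ℝ) ≤ E (c • X) + E ((-c) • X) := by
        have := hsub (c • X) ((-c) • X)
        rw [show c • X + (-c) • X = 0 by rw [← add_smul]; simp, hzero] at this
        linarith
      rw [hhom (-c) (by linarith) X] at h1
      nlinarith
  -- For each X, there is a dominated linear functional attaining E X at X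
  have hexists : ∀ X : ℋ, ∃ g : ℋ →ₗ[ℝ] ℝ, (∀ Y, g Y ≤ E Y) ∧ g X = E X := by
    intro X
    have H : ∀ c : ℝ, c • X = 0 → c • (E X) = 0 := by
      intro c hc
      rcases eq_or_ne c 0 with h | h
      · simp [h]
      · have hX : X = 0 := by
          have := congrArg (fun z => c⁻¹ • z) hc
          simpa [smul_smul, inv_mul_cancel₀ h] using this
        simp [hX, hzero]
    set f := LinearPMap.mkSpanSingleton' (σ := RingHom.id ℝ) X (E X) H with hf
    have hdom : ∀ x : f.domain, f x ≤ E x := by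
      rintro ⟨x, hx⟩
      rcases Submodule.mem_span_singleton.1 hx with ⟨c, rfl⟩
      rw [LinearPMap.mkSpanSingleton'_apply]
      exact (by simpa using hkey c X)
    obtain ⟨g, hg1, hg2⟩ := exists_extension_of_le_sublinear f E
      (fun c hc x => hhom c hc.le x) hsub hdom
    refine ⟨g, hg2, le_antisymm (hg2 X) ?_⟩
    have hXmem : X ∈ f.domain := Submodule.mem_span_singleton_self X
    have := hg1 ⟨X, hXmem⟩
    rw [LinearPMap.mkSpanSingleton'_apply_self] at this
    rw [this]
  refine ⟨?_, ?_, ?_⟩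
  · intro f hf
    constructor
    · intro X Y hXY
      have h1 : f (X - Y) ≤ E (X - Y) := hf _
      have h2 : E (X - Y) ≤ E 0 := by
        apply hmono
        intro ω
        have := hXY ω
        simp only [Submodule.coe_sub, Pi.sub_apply, Submodule.coe_zero, Pi.zero_apply]
        linarith
      rw [hzero] at h2
      have := f.map_sub X Y
      rw [this] at h1
      linarith
    · intro c
      have h1 : f ⟨fun _ => c, hconst c⟩ ≤ c := by
        have := hf ⟨fun _ => c, hconst c⟩
        rwa [hcp] at this
      have h2 : f (-⟨fun _ => c, hconst c⟩) ≤ -c := by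
        have heq : (-⟨fun _ => c, hconst c⟩ : ℋ) = ⟨fun _ => -c, hconst (-c)⟩ := by
          apply Subtype.ext; rfl
        rw [heq]
        have := hf ⟨fun _ => -c, hconst (-c)⟩
        rwa [hcp] at this
      rw [map_neg] at h2
      linarith
  · obtain ⟨g, hg, _⟩ := hexists 0
    exact ⟨g, hg⟩
  · intro X
    constructor
    · rintro r ⟨f, hf, rfl⟩
      exact hf X
    · intro b hb
      obtain ⟨g, hg1, hg2⟩ := hexists X
      have : E X ∈ {r : ℝ | ∃ f : ℋ →ₗ[ℝ] ℝ, (∀ Y, f Y ≤ E Y) ∧ r = f X} := ⟨g, hg1, hg2.symm⟩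
      exact hb this
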